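/- For 0 < α ≤ 1 and q := (1-√α)/(1+√α), any x ∈ ℝ^m with x_m = 0 satisfies f_Nsc(x; α, m) - inf_z f_Nsc(z; α, m) ≥ (α/2)·q^{2m+2}. -/

import Mathlib

open scoped RealInnerProductSpace BigOperators

/-- Nesterov's chain quadratic `Q(x; ξ, m, ζ)` on `ℝ^{n+1}` (so `m = n+1 ≥ 1`). -/
noncomputable def Qfun {n : ℕ} (ξ ζ : ℝ) (x : EuclideanSpace ℝ (Fin (n + 1))) : ℝ :=
  ξ / 2 * (x 0 - 1) ^ 2 + 1 / 2 * ∑ t : Fin n, (x t.succ - x t.castSucc) ^ 2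
    + ζ / 2 * (x (Fin.last n)) ^ 2

/-- Nesterov's strongly convex hard function `f_Nsc(x; α, m)` on `ℝ^{n+1}`. -/
noncomputable def fNsc {n : ℕ} (α : ℝ) (x : EuclideanSpace ℝ (Fin (n + 1))) : ℝ :=
  (1 - α) / 4 * Qfun 1 (2 * Real.sqrt α / (Real.sqrt α + 1)) x + α / 2 * ‖x‖ ^ 2

lemma linear_zero' (n : ℕ) (α q : ℝ) (hkey : (1-α)*(1-q)^2 = 4*α*q) (d : Fin (n+1) → ℝ) :
    (1-α)/4 * ((q - 1) * d 0
      + ∑ t : Fin n, (q^(t.1+2) - q^(t.1+1)) * (d t.succ - d t.castSucc)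
      + (1 - q) * q^(n+1) * d (Fin.last n))
    + α * ∑ i : Fin (n+1), q^(i.1+1) * d i = 0 := by
  have h2 : ∑ t : Fin n, (q^(t.1+2) - q^(t.1+1)) * d t.succ
      = (∑ i : Fin (n+1), (q^(i.1+1) - q^(i.1)) * d i) - (q - 1) * d 0 := by
    rw [Fin.sum_univ_succ (f := fun i : Fin (n+1) => (q^(i.1+1) - q^(i.1)) * d i)]
    simp only [Fin.val_succ, Fin.val_zero, pow_zero, pow_one]
    have : ∑ t : Fin n, (q^(t.1+1+1) - q^(t.1+1)) * d t.succ
        = ∑ t : Fin n, (q^(t.1+2) - q^(t.1+1)) * d t.succ :=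
      Finset.sum_congr rfl fun t _ => by norm_num
    rw [this]; ring
  have h3 : ∑ t : Fin n, (q^(t.1+2) - q^(t.1+1)) * d t.castSucc
      = (∑ i : Fin (n+1), (q^(i.1+2) - q^(i.1+1)) * d i) - (q^(n+2) - q^(n+1)) * d (Fin.last n) := by
    rw [Fin.sum_univ_castSucc (f := fun i : Fin (n+1) => (q^(i.1+2) - q^(i.1+1)) * d i)]
    simp only [Fin.coe_castSucc, Fin.val_last]
    ring
  have h1 : ∑ t : Fin n, (q^(t.1+2) - q^(t.1+1)) * (d t.succ - d t.castSucc)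
      = (∑ t : Fin n, (q^(t.1+2) - q^(t.1+1)) * d t.succ)
        - ∑ t : Fin n, (q^(t.1+2) - q^(t.1+1)) * d t.castSucc := by
    rw [← Finset.sum_sub_distrib]
    exact Finset.sum_congr rfl fun t _ => by ring
  have hc : (1-α)/4 * ((∑ i : Fin (n+1), (q^(i.1+1) - q^(i.1)) * d i)
          - ∑ i : Fin (n+1), (q^(i.1+2) - q^(i.1+1)) * d i)
        + α * ∑ i : Fin (n+1), q^(i.1+1) * d i
      = ∑ i : Fin (n+1), ((1-α)/4 * ((q^(i.1+1) - q^(i.1)) - (q^(i.1+2) - q^(i.1+1))) + α * q^(i.1+1)) * d i := by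
    rw [← Finset.sum_sub_distrib, Finset.mul_sum, Finset.mul_sum, ← Finset.sum_add_distrib]
    exact Finset.sum_congr rfl fun i _ => by ring
  have hz : ∑ i : Fin (n+1), ((1-α)/4 * ((q^(i.1+1) - q^(i.1)) - (q^(i.1+2) - q^(i.1+1))) + α * q^(i.1+1)) * d i = 0 :=
    Finset.sum_eq_zero fun i _ => by
      have h4 : (1-α)/4 * ((q^(i.1+1) - q^(i.1)) - (q^(i.1+2) - q^(i.1+1))) + α * q^(i.1+1) = 0 := by
        linear_combination (-q^(i.1)/4) * hkey
      rw [h4, zero_mul]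
  rw [h1, h2, h3]
  have hfin := hc.trans hz
  linear_combination hfin

lemma main_sum' (n : ℕ) (α q ζ : ℝ) (hα1 : α ≤ 1) (hα0 : 0 ≤ α) (hζ0 : 0 ≤ ζ) (hζ : ζ = 1 - q)
    (hkey : (1-α)*(1-q)^2 = 4*α*q) (x : Fin (n+1) → ℝ) :
    (1-α)/4 * (1/2*(x 0 - 1)^2 + 1/2 * ∑ t : Fin n, (x t.succ - x t.castSucc)^2
        + ζ/2 * (x (Fin.last n))^2)
      + α/2 * ∑ i : Fin (n+1), (x i)^2
    ≥ (1-α)/4 * (1/2*(q - 1)^2 + 1/2 * ∑ t : Fin n, (q^(t.1+2) - q^(t.1+1))^2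
        + ζ/2 * (q^(n+1))^2)
      + α/2 * ∑ i : Fin (n+1), (q^(i.1+1))^2
      + α/2 * (x (Fin.last n) - q^(n+1))^2 := by
  set d : Fin (n+1) → ℝ := fun i => x i - q^(i.1+1) with hd
  have hd0 : x 0 = q + d 0 := by simp [hd]
  have hdl : x (Fin.last n) = q^(n+1) + d (Fin.last n) := by simp [hd]
  have S1 : ∑ t : Fin n, (x t.succ - x t.castSucc)^2
      = ∑ t : Fin n, (q^(t.1+2) - q^(t.1+1))^2
        + ∑ t : Fin n, (d t.succ - d t.castSucc)^2
        + 2 * ∑ t : Fin n, (q^(t.1+2) - q^(t.1+1)) * (d t.succ - d t.castSucc) := by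
    rw [Finset.mul_sum, ← Finset.sum_add_distrib, ← Finset.sum_add_distrib]
    refine Finset.sum_congr rfl fun t _ => ?_
    simp only [hd, Fin.val_succ, Fin.coe_castSucc]
    ring
  have S2 : ∑ i : Fin (n+1), (x i)^2
      = ∑ i : Fin (n+1), (q^(i.1+1))^2 + ∑ i : Fin (n+1), (d i)^2
        + 2 * ∑ i : Fin (n+1), q^(i.1+1) * d i := by
    rw [Finset.mul_sum, ← Finset.sum_add_distrib, ← Finset.sum_add_distrib]
    refine Finset.sum_congr rfl fun i _ => ?_
    simp only [hd]
    ring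
  have L := linear_zero' n α q hkey d
  have hsum_le : (d (Fin.last n))^2 ≤ ∑ i : Fin (n+1), (d i)^2 :=
    Finset.single_le_sum (f := fun i => (d i)^2) (fun i _ => sq_nonneg _) (Finset.mem_univ _)
  have hP1 : 0 ≤ (1-α)/4 * (1/2 * (d 0)^2) :=
    mul_nonneg (by linarith) (by positivity)
  have hP2 : 0 ≤ (1-α)/4 * (1/2 * ∑ t : Fin n, (d t.succ - d t.castSucc)^2) :=
    mul_nonneg (by linarith) (by positivity)
  have hP3 : 0 ≤ (1-α)/4 * (ζ/2 * (d (Fin.last n))^2) :=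
    mul_nonneg (by linarith) (mul_nonneg (by linarith) (sq_nonneg _))
  have key : (1-α)/4 * (1/2*(x 0 - 1)^2 + 1/2 * ∑ t : Fin n, (x t.succ - x t.castSucc)^2
        + ζ/2 * (x (Fin.last n))^2)
      + α/2 * ∑ i : Fin (n+1), (x i)^2
      = (1-α)/4 * (1/2*(q - 1)^2 + 1/2 * ∑ t : Fin n, (q^(t.1+2) - q^(t.1+1))^2
          + ζ/2 * (q^(n+1))^2)
        + α/2 * ∑ i : Fin (n+1), (q^(i.1+1))^2
        + ((1-α)/4 * ((q - 1) * d 0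
            + ∑ t : Fin n, (q^(t.1+2) - q^(t.1+1)) * (d t.succ - d t.castSucc)
            + (1 - q) * q^(n+1) * d (Fin.last n))
          + α * ∑ i : Fin (n+1), q^(i.1+1) * d i)
        + ((1-α)/4 * (1/2 * (d 0)^2) + (1-α)/4 * (1/2 * ∑ t : Fin n, (d t.succ - d t.castSucc)^2)
          + (1-α)/4 * (ζ/2 * (d (Fin.last n))^2) + α/2 * ∑ i : Fin (n+1), (d i)^2) := by
    rw [S1, S2, hd0, hdl, hζ]
    ring
  rw [key, L, hdl]
  have heq : (q^(n+1) + d (Fin.last n) - q^(n+1))^2 = (d (Fin.last n))^2 := by ring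
  rw [heq]
  have h6 : α/2 * (d (Fin.last n))^2 ≤ α/2 * ∑ i : Fin (n+1), (d i)^2 :=
    mul_le_mul_of_nonneg_left hsum_le (by linarith)
  linarith [h6, hP1, hP2, hP3]

noncomputable def xstarAux (n : ℕ) (q : ℝ) : EuclideanSpace ℝ (Fin (n+1)) := WithLp.toLp 2 (fun i : Fin (n+1) => q ^ (i.1+1))

lemma norm_sq_eucl (n : ℕ) (y : EuclideanSpace ℝ (Fin (n+1))) : ‖y‖^2 = ∑ i, (y i)^2 := by
  rw [EuclideanSpace.norm_eq, Real.sq_sqrt (by positivity)]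
  simp [Real.norm_eq_abs, sq_abs]

lemma fNsc_eq_sums (n : ℕ) (α : ℝ) (y : EuclideanSpace ℝ (Fin (n+1))) :
    fNsc α y = (1-α)/4 * (1/2*(y 0 - 1)^2 + 1/2 * ∑ t : Fin n, (y t.succ - y t.castSucc)^2
        + (2 * Real.sqrt α / (Real.sqrt α + 1))/2 * (y (Fin.last n))^2)
      + α/2 * ∑ i : Fin (n+1), (y i)^2 := by
  rw [fNsc, Qfun, norm_sq_eucl]

theorem fNsc_lower_gap_of_last_coord_zero (n : ℕ) (α : ℝ) (hα0 : 0 < α) (hα1 : α ≤ 1)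
    (x : EuclideanSpace ℝ (Fin (n + 1))) (hx : x (Fin.last n) = 0) :
    fNsc α x - ⨅ z : EuclideanSpace ℝ (Fin (n + 1)), fNsc α z ≥
      α / 2 * ((1 - Real.sqrt α) / (1 + Real.sqrt α)) ^ (2 * (n + 1) + 2) := by
  set s := Real.sqrt α with hsdef
  have hs0 : 0 ≤ s := Real.sqrt_nonneg α
  have hs2 : s^2 = α := Real.sq_sqrt hα0.le
  have hs1 : s ≤ 1 := by nlinarith
  have hden : (0:ℝ) < 1 + s := by linarith
  set q := (1 - s) / (1 + s) with hqdef
  have hq0 : 0 ≤ q := div_nonneg (by linarith) (by linarith)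
  have hq1 : q ≤ 1 := by rw [hqdef, div_le_one hden]; linarith
  have hkey : (1-α)*(1-q)^2 = 4*α*q := by
    rw [hqdef, ← hs2]
    field_simp [hden.ne']
    ring
  have hζ : 2*s/(s+1) = 1 - q := by
    rw [hqdef, div_eq_iff (by linarith : (s+1:ℝ) ≠ 0)]
    have h2 : (1-s)/(1+s) * (1+s) = 1 - s := div_mul_cancel₀ _ hden.ne'
    rw [sub_mul, show (s+1:ℝ) = 1+s from by ring, h2]; ring
  have hζ0 : 0 ≤ 2*s/(s+1) := by positivity
  -- value at the candidate minimizer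
  set c : EuclideanSpace ℝ (Fin (n+1)) := xstarAux n q with hc
  have hcv : ∀ i : Fin (n+1), c i = q^(i.1+1) := fun i => rfl
  -- main inequality
  have hmain : fNsc α x ≥ fNsc α c + α/2 * (x (Fin.last n) - q^(n+1))^2 := by
    rw [fNsc_eq_sums, fNsc_eq_sums]
    have h0 : c 0 = q := by rw [hcv]; simp
    have hl : c (Fin.last n) = q^(n+1) := by rw [hcv]; simp
    have hsucc : ∀ t : Fin n, c t.succ - c t.castSucc = q^(t.1+2) - q^(t.1+1) := by
      intro t; rw [hcv, hcv]; simp [Fin.val_succ, Fin.coe_castSucc]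
    have hsumc : ∑ t : Fin n, (c t.succ - c t.castSucc)^2 = ∑ t : Fin n, (q^(t.1+2) - q^(t.1+1))^2 :=
      Finset.sum_congr rfl fun t _ => by rw [hsucc t]
    have hsumc2 : ∑ i : Fin (n+1), (c i)^2 = ∑ i : Fin (n+1), (q^(i.1+1))^2 :=
      Finset.sum_congr rfl fun i _ => by rw [hcv]
    rw [h0, hl, hsumc, hsumc2]
    exact main_sum' n α q (2*s/(s+1)) hα1 hα0.le hζ0 hζ hkey x
  -- boundedness below and infimum bound
  have hbdd : BddBelow (Set.range fun z : EuclideanSpace ℝ (Fin (n+1)) => fNsc α z) := by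
    refine ⟨0, ?_⟩
    rintro v ⟨z, rfl⟩
    show (0:ℝ) ≤ fNsc α z
    rw [fNsc_eq_sums]
    have h1 : 0 ≤ (1-α)/4 * (1/2*(z 0 - 1)^2 + 1/2 * ∑ t : Fin n, (z t.succ - z t.castSucc)^2
        + (2*s/(s+1))/2 * (z (Fin.last n))^2) := by
      apply mul_nonneg (by linarith)
      have : 0 ≤ (2*s/(s+1))/2 * (z (Fin.last n))^2 := by positivity
      positivity
    have h2 : 0 ≤ α/2 * ∑ i : Fin (n+1), (z i)^2 := by positivity
    linarith
  have hinf : (⨅ z : EuclideanSpace ℝ (Fin (n+1)), fNsc α z) ≤ fNsc α c := ciInf_le hbdd c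
  -- final arithmetic
  have hx2 : (x (Fin.last n) - q^(n+1))^2 = q^(2*(n+1)) := by
    rw [hx, two_mul, pow_add]; ring
  have hpow : q^(2*(n+1)+2) ≤ q^(2*(n+1)) := pow_le_pow_of_le_one hq0 hq1 (by omega)
  have hmul : α/2 * q^(2*(n+1)+2) ≤ α/2 * q^(2*(n+1)) :=
    mul_le_mul_of_nonneg_left hpow (by linarith)
  calc fNsc α x - ⨅ z : EuclideanSpace ℝ (Fin (n+1)), fNsc α z
      ≥ fNsc α x - fNsc α c := by linarith [hinf]
    _ ≥ α/2 * (x (Fin.last n) - q^(n+1))^2 := by linarith [hmain]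
    _ = α/2 * q^(2*(n+1)) := by rw [hx2]
    _ ≥ α/2 * q^(2*(n+1)+2) := hmul
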